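/- Let B = (b_1, …, b_n) ∈ ℝ^{m×n} be a basis with n = pk + d for integers p ≥ 1, d ≥ k ≥ 2, let δ ≥ 1, and let γ_k ≥ 1 be an admissible Hermite bound for rank k. Assume that for each i ∈ [0, p−1] the block B_{[ik+d+1,(i+1)k+d]} is δ-SVP-reduced, and for each i ∈ [0, p−2] the block B_{[ik+d+2,(i+1)k+d+1]} is δ-DSVP-reduced. Then B_{[d+1,n]} is (δ²γ_k)^{(n−d−1)/(2(k−1))}-HSVP-reduced, i.e., ‖b*_{d+1}‖ ≤ (δ²γ_k)^{(n−d−1)/(2(k−1))} · vol(L(B_{[d+1,n]}))^{1/(n−d)}. -/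

import Mathlib

noncomputable section

/-- Euclidean space `ℝ^m`. -/
abbrev Euc (m : ℕ) : Type := EuclideanSpace ℝ (Fin m)

variable {m : ℕ}

/-- `projGS B s` is the orthogonal projection `π_{s+1}` onto the subspace orthogonal to
`b_1, …, b_s` (0-based: orthogonal to `B 0, …, B (s-1)`). -/
def projGS (B : ℕ → Euc m) (s : ℕ) (x : Euc m) : Euc m :=
  (Submodule.orthogonalProjectionOnto ((Submodule.span ℝ (B '' Set.Iio s))ᗮ) x : Euc m)

/-- The Gram–Schmidt vector `b*_{i+1}` (0-based index `i`). -/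
def gsoVec (B : ℕ → Euc m) (i : ℕ) : Euc m := projGS B i (B i)

/-- The projected block `B_{[s+1, s+ℓ]}` (0-based start `s`; the length is supplied
separately to the predicates below). -/
def block (B : ℕ → Euc m) (s : ℕ) : ℕ → Euc m := fun t => projGS B s (B (s + t))

/-- Gram matrix of the first `ℓ` vectors. -/
def gram (B : ℕ → Euc m) (ℓ : ℕ) : Matrix (Fin ℓ) (Fin ℓ) ℝ :=
  Matrix.of fun i j => (inner ℝ (B i) (B j) : ℝ)

/-- `vol(L(B)) = det(BᵀB)^{1/2}` for the first `ℓ` vectors. -/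
def volB (B : ℕ → Euc m) (ℓ : ℕ) : ℝ := Real.sqrt (gram B ℓ).det

/-- The lattice generated by the first `ℓ` vectors. -/
def latticeSpan (B : ℕ → Euc m) (ℓ : ℕ) : Submodule ℤ (Euc m) :=
  Submodule.span ℤ (B '' Set.Iio ℓ)

/-- `λ₁(L)`: the minimum norm of a nonzero lattice vector. -/
def lambda1 (L : Submodule ℤ (Euc m)) : ℝ :=
  sInf {r : ℝ | ∃ x ∈ L, x ≠ 0 ∧ ‖x‖ = r}

/-- `B` (of rank `ℓ`) is `δ`-SVP-reduced. -/
def SVPReduced (δ : ℝ) (B : ℕ → Euc m) (ℓ : ℕ) : Prop :=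
  ‖B 0‖ ≤ δ * lambda1 (latticeSpan B ℓ)

/-- `B` (of rank `ℓ`) is `δ`-HSVP-reduced. -/
def HSVPReduced (δ : ℝ) (B : ℕ → Euc m) (ℓ : ℕ) : Prop :=
  ‖B 0‖ ≤ δ * volB B ℓ ^ ((1 : ℝ) / ℓ)

/-- The dual basis `B^× = B (BᵀB)⁻¹` of the first `ℓ` vectors (extended by `0`). -/
def dualFam (B : ℕ → Euc m) (ℓ : ℕ) : ℕ → Euc m := fun i =>
  if h : i < ℓ then ∑ j : Fin ℓ, ((gram B ℓ)⁻¹ j ⟨i, h⟩) • B j else 0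

/-- The reversed dual basis `B^{-s}`. -/
def revDual (B : ℕ → Euc m) (ℓ : ℕ) : ℕ → Euc m := fun i => dualFam B ℓ (ℓ - 1 - i)

/-- `B` (of rank `ℓ`) is `δ`-DHSVP-reduced: its reversed dual basis is `δ`-HSVP-reduced. -/
def DHSVPReduced (δ : ℝ) (B : ℕ → Euc m) (ℓ : ℕ) : Prop :=
  HSVPReduced δ (revDual B ℓ) ℓ

/-- `B = (b_1, …, b_{d+1})` is `δ`-twin-reduced: `B_{[1,d]}` is `δ`-HSVP-reduced and
`B_{[2,d+1]}` is `δ`-DHSVP-reduced. -/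
def TwinReduced (δ : ℝ) (B : ℕ → Euc m) (d : ℕ) : Prop :=
  HSVPReduced δ (block B 0) d ∧ DHSVPReduced δ (block B 1) d

/-- Gram–Schmidt coefficient `μ_{i,j}` (0-based). -/
def mu (B : ℕ → Euc m) (i j : ℕ) : ℝ :=
  (inner ℝ (B i) (gsoVec B j) : ℝ) / ‖gsoVec B j‖ ^ 2

/-- The first `ℓ` vectors are size-reduced. -/
def SizeReduced (B : ℕ → Euc m) (ℓ : ℕ) : Prop :=
  ∀ i j, j < i → i < ℓ → |mu B i j| ≤ 1 / 2

/-- The first `ℓ` vectors are `ε`-LLL-reduced. -/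
def LLLReduced (ε : ℝ) (B : ℕ → Euc m) (ℓ : ℕ) : Prop :=
  SizeReduced B ℓ ∧
    ∀ i, 0 < i → i < ℓ →
      ‖gsoVec B (i - 1)‖ ^ 2 ≤ (1 + ε) * ‖mu B i (i - 1) • gsoVec B (i - 1) + gsoVec B i‖ ^ 2

/-- `B` (of rank `ℓ`) is `δ`-DSVP-reduced: its reversed dual basis is `δ`-SVP-reduced
and `B` is `(1/3)`-LLL-reduced. -/
def DSVPReduced (δ : ℝ) (B : ℕ → Euc m) (ℓ : ℕ) : Prop :=
  SVPReduced δ (revDual B ℓ) ℓ ∧ LLLReduced (1 / 3) B ℓ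

/-- `γ` is an admissible Hermite bound for rank `r`: every lattice generated by `r`
linearly independent vectors of a Euclidean space satisfies `λ₁² ≤ γ · vol^{2/r}`. -/
def IsHermiteBound (γ : ℝ) (r : ℕ) : Prop :=
  ∀ (m' : ℕ) (v : ℕ → Euc m'), LinearIndependent ℝ (fun i : Fin r => v i) →
    lambda1 (latticeSpan v r) ^ 2 ≤ γ * volB v r ^ ((2 : ℝ) / r)


section Aux
open Submodule Finset Matrix RealInnerProductSpace


def spanW (B : ℕ → Euc m) (s : ℕ) : Submodule ℝ (Euc m) := Submodule.span ℝ (B '' Set.Iio s)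

lemma image_Iio_eq_range (f : ℕ → Euc m) (ℓ : ℕ) :
    f '' Set.Iio ℓ = Set.range (fun a : Fin ℓ => f a) := by
  ext x; constructor
  · rintro ⟨a, ha, rfl⟩; exact ⟨⟨a, ha⟩, rfl⟩
  · rintro ⟨a, rfl⟩; exact ⟨a, a.isLt, rfl⟩

lemma projGS_mem_orth (B : ℕ → Euc m) (s : ℕ) (x : Euc m) :
    projGS B s x ∈ (spanW B s)ᗮ := (Submodule.orthogonalProjectionOnto _ x).2

lemma sub_projGS_mem (B : ℕ → Euc m) (s : ℕ) (x : Euc m) :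
    x - projGS B s x ∈ spanW B s := by
  have h := Submodule.sub_starProjection_mem_orthogonal (K := (spanW B s)ᗮ) x
  rwa [Submodule.orthogonal_orthogonal] at h

lemma projGS_eq (B : ℕ → Euc m) (s : ℕ) {x u : Euc m} (hu : u ∈ (spanW B s)ᗮ)
    (hxu : x - u ∈ spanW B s) : projGS B s x = u := by
  unfold projGS
  exact Submodule.eq_starProjection_of_mem_orthogonal hu
    (by rwa [Submodule.orthogonal_orthogonal])

def projL (B : ℕ → Euc m) (s : ℕ) : Euc m →ₗ[ℝ] Euc m :=
  ((spanW B s)ᗮ).subtype ∘ₗ (Submodule.orthogonalProjectionOnto ((spanW B s)ᗮ)).toLinearMap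

lemma projGS_eq_projL (B : ℕ → Euc m) (s : ℕ) (x : Euc m) :
    projGS B s x = projL B s x := rfl

lemma projGS_eq_zero (B : ℕ → Euc m) (s : ℕ) {x : Euc m} (hx : x ∈ spanW B s) :
    projGS B s x = 0 :=
  projGS_eq B s (zero_mem _) (by simpa using hx)

lemma mem_of_projGS_eq_zero (B : ℕ → Euc m) (s : ℕ) {x : Euc m}
    (h : projGS B s x = 0) : x ∈ spanW B s := by
  have := sub_projGS_mem B s x
  rwa [h, sub_zero] at this

lemma spanW_mono (B : ℕ → Euc m) {s t : ℕ} (h : s ≤ t) : spanW B s ≤ spanW B t :=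
  Submodule.span_mono (Set.image_mono (fun x hx => lt_of_lt_of_le hx h))

lemma mem_spanW_self (B : ℕ → Euc m) {i s : ℕ} (h : i < s) : B i ∈ spanW B s :=
  Submodule.subset_span ⟨i, h, rfl⟩

lemma sub_gsoVec_mem (B : ℕ → Euc m) (i : ℕ) : B i - gsoVec B i ∈ spanW B i :=
  sub_projGS_mem B i (B i)

lemma gsoVec_mem_orth (B : ℕ → Euc m) (i : ℕ) : gsoVec B i ∈ (spanW B i)ᗮ :=
  projGS_mem_orth B i (B i)

lemma gsoVec_mem_spanW_succ (B : ℕ → Euc m) (i : ℕ) : gsoVec B i ∈ spanW B (i + 1) := by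
  have h1 : B i ∈ spanW B (i + 1) := mem_spanW_self B (Nat.lt_succ_self i)
  have h2 : B i - gsoVec B i ∈ spanW B (i + 1) :=
    spanW_mono B (Nat.le_succ i) (sub_gsoVec_mem B i)
  simpa using sub_mem h1 h2

lemma inner_gsoVec_of_mem (B : ℕ → Euc m) (i : ℕ) {w : Euc m} (hw : w ∈ spanW B i) :
    ⟪w, gsoVec B i⟫ = 0 :=
  (Submodule.mem_orthogonal _ _).1 (gsoVec_mem_orth B i) w hw

lemma inner_gsoVec_gsoVec (B : ℕ → Euc m) {i j : ℕ} (h : j < i) :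
    ⟪gsoVec B j, gsoVec B i⟫ = 0 :=
  inner_gsoVec_of_mem B i (spanW_mono B h (gsoVec_mem_spanW_succ B j))

lemma inner_gsoVec_self (B : ℕ → Euc m) (i : ℕ) :
    ⟪gsoVec B i, B i⟫ = ‖gsoVec B i‖ ^ 2 := by
  have : ⟪gsoVec B i, B i - gsoVec B i⟫ = 0 := by
    rw [real_inner_comm]
    exact inner_gsoVec_of_mem B i (sub_gsoVec_mem B i)
  have h2 : ⟪gsoVec B i, B i⟫ - ⟪gsoVec B i, gsoVec B i⟫ = 0 := by
    rw [← inner_sub_right]; exact this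
  rw [← real_inner_self_eq_norm_sq]; linarith

lemma inner_gsoVec_B_of_lt (B : ℕ → Euc m) {i a : ℕ} (h : i < a) :
    ⟪gsoVec B a, B i⟫ = 0 := by
  rw [real_inner_comm]
  exact inner_gsoVec_of_mem B a (mem_spanW_self B h)

lemma gsoVec_ne_zero {B : ℕ → Euc m} {ℓ : ℕ}
    (h : LinearIndependent ℝ (fun j : Fin ℓ => B j)) {i : ℕ} (hi : i < ℓ) :
    gsoVec B i ≠ 0 := by
  intro h0
  have hmem : B i ∈ spanW B i := by
    have := sub_gsoVec_mem B i
    rwa [h0, sub_zero] at this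
  have himg : B '' Set.Iio i = (fun j : Fin ℓ => B j) '' {j : Fin ℓ | (j : ℕ) < i} := by
    ext x; constructor
    · rintro ⟨a, ha, rfl⟩; exact ⟨⟨a, lt_trans ha hi⟩, ha, rfl⟩
    · rintro ⟨a, ha, rfl⟩; exact ⟨a, ha, rfl⟩
  have := h.notMem_span_image (x := ⟨i, hi⟩) (s := {j : Fin ℓ | (j : ℕ) < i})
    (by simp)
  exact this (by rw [spanW, himg] at hmem; exact hmem)

lemma spanW_gso (B : ℕ → Euc m) (ℓ : ℕ) :
    Submodule.span ℝ (gsoVec B '' Set.Iio ℓ) = spanW B ℓ := by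
  induction ℓ with
  | zero =>
    have : Set.Iio 0 = (∅ : Set ℕ) := by ext j; simp
    simp [spanW, this]
  | succ n ih =>
    have hins : Set.Iio (n + 1) = insert n (Set.Iio n) := by
      ext j; simp
    rw [spanW, hins, Set.image_insert_eq, Set.image_insert_eq,
      Submodule.span_insert, Submodule.span_insert, ih]
    have hWn : spanW B n ≤ spanW B (n+1) := spanW_mono B (Nat.le_succ n)
    have hBn : B n = gsoVec B n + (B n - gsoVec B n) := by abel
    apply le_antisymm
    · apply sup_le
      · rw [Submodule.span_singleton_le_iff_mem]
        have : gsoVec B n = B n - (B n - gsoVec B n) := by abel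
        rw [this]
        exact sub_mem (le_sup_left (α := Submodule ℝ (Euc m)) (Submodule.mem_span_singleton_self _))
          (le_sup_right (α := Submodule ℝ (Euc m)) (sub_gsoVec_mem B n))
      · exact le_sup_right
    · apply sup_le
      · rw [Submodule.span_singleton_le_iff_mem, hBn]
        exact add_mem (le_sup_left (α := Submodule ℝ (Euc m)) (Submodule.mem_span_singleton_self _))
          (le_sup_right (α := Submodule ℝ (Euc m)) (sub_gsoVec_mem B n))
      · exact le_sup_right

lemma repr_gso {B : ℕ → Euc m} {ℓ : ℕ} (h : LinearIndependent ℝ (fun j : Fin ℓ => B j))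
    {i : ℕ} (hi : i < ℓ) :
    B i = ∑ a : Fin ℓ, (⟪gsoVec B (a : ℕ), B i⟫ / ‖gsoVec B (a : ℕ)‖ ^ 2) • gsoVec B (a : ℕ) := by
  have hmem : B i ∈ spanW B ℓ := mem_spanW_self B hi
  rw [← spanW_gso, image_Iio_eq_range] at hmem
  obtain ⟨c, hc⟩ := (Submodule.mem_span_range_iff_exists_fun ℝ).1 hmem
  have hco : ∀ a : Fin ℓ, c a = ⟪gsoVec B (a : ℕ), B i⟫ / ‖gsoVec B (a : ℕ)‖ ^ 2 := by
    intro a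
    have hinner : ⟪gsoVec B (a : ℕ), B i⟫ = c a * ‖gsoVec B (a : ℕ)‖ ^ 2 := by
      rw [← hc, inner_sum, Finset.sum_eq_single a]
      · rw [real_inner_smul_right, real_inner_self_eq_norm_sq]
      · intro b _ hb
        rw [real_inner_smul_right]
        rcases lt_or_gt_of_ne (fun hx => hb (Fin.ext hx) : (b : ℕ) ≠ a) with hlt | hlt
        · rw [real_inner_comm, inner_gsoVec_gsoVec B hlt, mul_zero]
        · rw [inner_gsoVec_gsoVec B hlt, mul_zero]
      · intro ha; exact absurd (Finset.mem_univ a) ha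
    have hnz : ‖gsoVec B (a : ℕ)‖ ^ 2 ≠ 0 :=
      pow_ne_zero 2 (norm_ne_zero_iff.2 (gsoVec_ne_zero h a.isLt))
    rw [hinner, mul_div_cancel_right₀ _ hnz]
  calc B i = ∑ a : Fin ℓ, c a • gsoVec B (a : ℕ) := hc.symm
    _ = _ := Finset.sum_congr rfl fun a _ => by rw [hco a]

lemma inner_gso_B {B : ℕ → Euc m} {ℓ : ℕ} (h : LinearIndependent ℝ (fun j : Fin ℓ => B j))
    {i : ℕ} (hi : i < ℓ) (a : Fin ℓ) :
    ⟪gsoVec B (a : ℕ), B i⟫ = (⟪gsoVec B (a : ℕ), B i⟫ / ‖gsoVec B (a : ℕ)‖ ^ 2) *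
      ‖gsoVec B (a : ℕ)‖ ^ 2 := by
  have hnz : ‖gsoVec B (a : ℕ)‖ ^ 2 ≠ 0 :=
    pow_ne_zero 2 (norm_ne_zero_iff.2 (gsoVec_ne_zero h a.isLt))
  rw [div_mul_cancel₀ _ hnz]

lemma gram_det {B : ℕ → Euc m} {ℓ : ℕ} (h : LinearIndependent ℝ (fun j : Fin ℓ => B j)) :
    (gram B ℓ).det = ∏ a : Fin ℓ, ‖gsoVec B (a : ℕ)‖ ^ 2 := by
  classical
  set M : Matrix (Fin ℓ) (Fin ℓ) ℝ :=
    Matrix.of (fun i a : Fin ℓ => ⟪gsoVec B (a : ℕ), B (i : ℕ)⟫ / ‖gsoVec B (a : ℕ)‖ ^ 2)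
    with hM
  set D : Matrix (Fin ℓ) (Fin ℓ) ℝ :=
    Matrix.diagonal (fun a : Fin ℓ => ‖gsoVec B (a : ℕ)‖ ^ 2) with hD
  have hfact : gram B ℓ = M * D * Mᵀ := by
    ext i j
    have : (M * D * Mᵀ) i j = ∑ a : Fin ℓ, (M i a * ‖gsoVec B (a : ℕ)‖ ^ 2) * M j a := by
      rw [Matrix.mul_apply]
      exact Finset.sum_congr rfl fun a _ => by
        rw [Matrix.mul_diagonal, Matrix.transpose_apply]
    rw [this]
    show ⟪B (i : ℕ), B (j : ℕ)⟫ = _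
    conv_lhs => rw [repr_gso h i.isLt]
    rw [sum_inner]
    refine Finset.sum_congr rfl fun a _ => ?_
    rw [real_inner_smul_left]
    have : ⟪gsoVec B (a : ℕ), B (j : ℕ)⟫ = M j a * ‖gsoVec B (a : ℕ)‖ ^ 2 :=
      inner_gso_B h j.isLt a
    rw [this, hM]
    simp only [Matrix.of_apply]
    ring
  have htri : M.BlockTriangular OrderDual.toDual := by
    intro i j hij
    have hij' : (i : ℕ) < (j : ℕ) := hij
    simp only [hM, Matrix.of_apply]
    rw [inner_gsoVec_B_of_lt B hij', zero_div]
  have hMtri : M.det = 1 := by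
    rw [Matrix.det_of_lowerTriangular M htri]
    apply Finset.prod_eq_one
    intro a _
    have hnz : ‖gsoVec B (a : ℕ)‖ ^ 2 ≠ 0 :=
      pow_ne_zero 2 (norm_ne_zero_iff.2 (gsoVec_ne_zero h a.isLt))
    simp only [hM, Matrix.of_apply, inner_gsoVec_self B (a : ℕ)]
    exact div_self hnz
  rw [hfact, Matrix.det_mul, Matrix.det_mul, Matrix.det_transpose, hMtri,
    Matrix.det_diagonal]
  ring

lemma volB_eq_prod {B : ℕ → Euc m} {ℓ : ℕ} (h : LinearIndependent ℝ (fun j : Fin ℓ => B j)) :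
    volB B ℓ = ∏ a : Fin ℓ, ‖gsoVec B (a : ℕ)‖ := by
  rw [volB, gram_det h, Finset.prod_pow]
  exact Real.sqrt_sq (Finset.prod_nonneg fun a _ => norm_nonneg _)

lemma block_mem_orth (B : ℕ → Euc m) (s t : ℕ) : block B s t ∈ (spanW B s)ᗮ :=
  projGS_mem_orth B s _

lemma spanW_block (B : ℕ → Euc m) (s : ℕ) : ∀ t : ℕ,
    spanW B s ⊔ Submodule.span ℝ (block B s '' Set.Iio t) = spanW B (s + t) := by
  intro t
  induction t with
  | zero =>
    have : Set.Iio 0 = (∅ : Set ℕ) := by ext j; simp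
    simp [this]
  | succ t ih =>
    have hins : Set.Iio (t + 1) = insert t (Set.Iio t) := by ext j; simp
    have hins' : Set.Iio (s + (t + 1)) = insert (s + t) (Set.Iio (s + t)) := by
      ext j; simp; omega
    rw [hins, Set.image_insert_eq, Submodule.span_insert]
    rw [show spanW B (s + (t+1)) = Submodule.span ℝ (B '' Set.Iio (s + (t+1))) from rfl,
      hins', Set.image_insert_eq, Submodule.span_insert]
    rw [show Submodule.span ℝ (B '' Set.Iio (s + t)) = spanW B (s + t) from rfl, ← ih]
    have hsub : B (s + t) - block B s t ∈ spanW B s := sub_projGS_mem B s _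
    apply le_antisymm
    · refine sup_le (le_sup_of_le_right le_sup_left) (sup_le ?_ (le_sup_of_le_right le_sup_right))
      rw [Submodule.span_singleton_le_iff_mem]
      have hβ : block B s t = B (s + t) - (B (s + t) - block B s t) := by abel
      rw [hβ]
      exact sub_mem (Submodule.mem_sup_left (Submodule.mem_span_singleton_self _))
        (Submodule.mem_sup_right (Submodule.mem_sup_left hsub))
    · refine sup_le ?_ (sup_le le_sup_left (le_sup_of_le_right le_sup_right))
      rw [Submodule.span_singleton_le_iff_mem]
      have hb : B (s + t) = block B s t + (B (s + t) - block B s t) := by abel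
      rw [hb]
      exact add_mem (Submodule.mem_sup_right (Submodule.mem_sup_left
          (Submodule.mem_span_singleton_self _)))
        (Submodule.mem_sup_left hsub)

lemma span_block_le_orth (B : ℕ → Euc m) (s t : ℕ) :
    Submodule.span ℝ (block B s '' Set.Iio t) ≤ (spanW B s)ᗮ := by
  rw [Submodule.span_le]
  rintro x ⟨a, _, rfl⟩
  exact block_mem_orth B s a

lemma gsoVec_block (B : ℕ → Euc m) (s t : ℕ) :
    gsoVec (block B s) t = gsoVec B (s + t) := by
  set K := Submodule.span ℝ (block B s '' Set.Iio t) with hK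
  have hKW : K ≤ spanW B (s + t) := by
    rw [← spanW_block B s t]; exact le_sup_right
  have h1 : gsoVec B (s + t) ∈ (spanW (block B s) t)ᗮ := by
    have : gsoVec B (s + t) ∈ (spanW B (s + t))ᗮ := gsoVec_mem_orth B (s + t)
    exact Submodule.orthogonal_le hKW this
  apply projGS_eq (block B s) t h1
  -- block B s t - gsoVec B (s+t) ∈ K
  have key : block B s t - gsoVec B (s + t) ∈ spanW (block B s) t := by
    set y := block B s t - gsoVec B (s + t) with hy
    have hy2 : y = (B (s + t) - gsoVec B (s + t)) - (B (s + t) - block B s t) := by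
      rw [hy]; abel
    have hyW2 : y ∈ spanW B (s + t) := by
      rw [hy2]
      exact sub_mem (sub_gsoVec_mem B (s + t))
        (spanW_mono B (Nat.le_add_right s t) (sub_projGS_mem B s _))
    have hyorth : y ∈ (spanW B s)ᗮ := by
      rw [hy]
      exact sub_mem (block_mem_orth B s t)
        (Submodule.orthogonal_le (spanW_mono B (Nat.le_add_right s t))
          (gsoVec_mem_orth B (s + t)))
    -- y ∈ spanW B s ⊔ K and y ⊥ spanW B s ⇒ y ∈ K
    rw [← spanW_block B s t] at hyW2
    obtain ⟨w, hw, z, hz, hwz⟩ := Submodule.mem_sup.1 hyW2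
    have hworth : w ∈ (spanW B s)ᗮ := by
      have : w = y - z := by rw [← hwz]; abel
      rw [this]
      exact sub_mem hyorth (span_block_le_orth B s t hz)
    have hw0 : w = 0 := by
      have := (Submodule.mem_orthogonal _ _).1 hworth w hw
      exact inner_self_eq_zero.1 this
    rw [← hwz, hw0, zero_add]
    exact hz
  exact key

lemma block_linearIndependent {B : ℕ → Euc m} {n : ℕ}
    (hB : LinearIndependent ℝ (fun i : Fin n => B i)) {s ℓ : ℕ} (hsl : s + ℓ ≤ n) :
    LinearIndependent ℝ (fun t : Fin ℓ => block B s t) := by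
  rw [Fintype.linearIndependent_iff]
  intro c hc
  have hsum : ∑ t : Fin ℓ, c t • block B s (t : ℕ) =
      projL B s (∑ t : Fin ℓ, c t • B (s + (t : ℕ))) := by
    rw [map_sum]
    exact Finset.sum_congr rfl fun t _ => by
      rw [_root_.map_smul]; rfl
  have hmem : ∑ t : Fin ℓ, c t • B (s + (t : ℕ)) ∈ spanW B s := by
    apply mem_of_projGS_eq_zero B s
    rw [projGS_eq_projL, ← hsum, hc]
  rw [show spanW B s = Submodule.span ℝ (B '' Set.Iio s) from rfl,
    image_Iio_eq_range] at hmem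
  obtain ⟨dcoef, hd⟩ := (Submodule.mem_span_range_iff_exists_fun ℝ).1 hmem
  have hli : LinearIndependent ℝ (fun j : Fin (s + ℓ) => B j) := by
    have : (fun j : Fin (s + ℓ) => B (j : ℕ)) =
        (fun i : Fin n => B (i : ℕ)) ∘ Fin.castLE hsl := rfl
    rw [this]
    exact hB.comp _ (Fin.castLE_injective hsl)
  rw [Fintype.linearIndependent_iff] at hli
  set d' : ℕ → ℝ := fun j => if h : j < s then dcoef ⟨j, h⟩ else 0 with hd'
  set c' : ℕ → ℝ := fun j => if h : j < ℓ then c ⟨j, h⟩ else 0 with hc'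
  have hd'eq : ∀ i : Fin s, d' (i : ℕ) = dcoef i := by
    intro i; rw [hd']; simp only [i.isLt, dif_pos, Fin.eta]
  have hc'eq : ∀ t : Fin ℓ, c' (t : ℕ) = c t := by
    intro t; rw [hc']; simp only [t.isLt, dif_pos, Fin.eta]
  set e : Fin (s + ℓ) → ℝ := fun j =>
    if (j : ℕ) < s then d' (j : ℕ) else -c' ((j : ℕ) - s) with he
  have he0 : ∀ j, e j = 0 := by
    apply hli
    rw [Fin.sum_univ_add]
    have h1 : ∀ i : Fin s, e (Fin.castAdd ℓ i) • B ((Fin.castAdd ℓ i : Fin (s+ℓ)) : ℕ) =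
        dcoef i • B (i : ℕ) := by
      intro i
      have : e (Fin.castAdd ℓ i) = dcoef i := by
        rw [he]; simp only [Fin.coe_castAdd, if_pos i.isLt, hd'eq]
      rw [this]; rfl
    have h2 : ∀ t : Fin ℓ, e (Fin.natAdd s t) • B ((Fin.natAdd s t : Fin (s+ℓ)) : ℕ) =
        -(c t • B (s + (t : ℕ))) := by
      intro t
      have : e (Fin.natAdd s t) = -c t := by
        rw [he]; simp only [Fin.coe_natAdd]
        rw [if_neg (by omega), Nat.add_sub_cancel_left, hc'eq]
      rw [this, Fin.coe_natAdd, neg_smul]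
    rw [Finset.sum_congr rfl (fun i _ => h1 i), Finset.sum_congr rfl (fun t _ => h2 t),
      Finset.sum_neg_distrib, hd]
    exact add_neg_cancel _
  intro t
  have h3 := he0 (Fin.natAdd s t)
  rw [he] at h3
  simp only [Fin.coe_natAdd] at h3
  rw [if_neg (by omega), Nat.add_sub_cancel_left, hc'eq] at h3
  linarith [neg_eq_zero.1 h3]

lemma volB_block {B : ℕ → Euc m} {n : ℕ}
    (hB : LinearIndependent ℝ (fun i : Fin n => B i)) {s ℓ : ℕ} (hsl : s + ℓ ≤ n) :
    volB (block B s) ℓ = ∏ t ∈ Finset.range ℓ, ‖gsoVec B (s + t)‖ := by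
  rw [volB_eq_prod (block_linearIndependent hB hsl), ← Fin.prod_univ_eq_prod_range]
  exact Finset.prod_congr rfl fun t _ => by rw [gsoVec_block]

lemma gram_det_ne_zero {C : ℕ → Euc m} {ℓ : ℕ}
    (hC : LinearIndependent ℝ (fun j : Fin ℓ => C j)) : (gram C ℓ).det ≠ 0 := by
  rw [gram_det hC]
  exact Finset.prod_ne_zero_iff.2 fun a _ =>
    pow_ne_zero 2 (norm_ne_zero_iff.2 (gsoVec_ne_zero hC a.isLt))

lemma gram_det_unit {C : ℕ → Euc m} {ℓ : ℕ}
    (hC : LinearIndependent ℝ (fun j : Fin ℓ => C j)) : IsUnit (gram C ℓ).det :=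
  isUnit_iff_ne_zero.2 (gram_det_ne_zero hC)

lemma dualFam_apply (C : ℕ → Euc m) (ℓ : ℕ) (i : Fin ℓ) :
    dualFam C ℓ (i : ℕ) = ∑ j : Fin ℓ, ((gram C ℓ)⁻¹ j i) • C (j : ℕ) := by
  rw [dualFam, dif_pos i.isLt]

lemma inner_dualFam_C {C : ℕ → Euc m} {ℓ : ℕ}
    (hC : LinearIndependent ℝ (fun j : Fin ℓ => C j)) (i j : Fin ℓ) :
    ⟪dualFam C ℓ (i : ℕ), C (j : ℕ)⟫ = if j = i then 1 else 0 := by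
  rw [dualFam_apply, sum_inner]
  have : ∀ a : Fin ℓ, ⟪((gram C ℓ)⁻¹ a i) • C (a : ℕ), C (j : ℕ)⟫ =
      gram C ℓ j a * (gram C ℓ)⁻¹ a i := by
    intro a
    rw [real_inner_smul_left]
    have h1 : (inner ℝ (C (a : ℕ)) (C (j : ℕ)) : ℝ) = gram C ℓ j a := real_inner_comm _ _
    rw [h1]; ring
  rw [Finset.sum_congr rfl fun a _ => this a, ← Matrix.mul_apply,
    Matrix.mul_nonsing_inv _ (gram_det_unit hC), Matrix.one_apply]

lemma gram_dualFam {C : ℕ → Euc m} {ℓ : ℕ}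
    (hC : LinearIndependent ℝ (fun j : Fin ℓ => C j)) :
    gram (dualFam C ℓ) ℓ = (gram C ℓ)⁻¹ := by
  ext i j
  show (inner ℝ (dualFam C ℓ (i : ℕ)) (dualFam C ℓ (j : ℕ)) : ℝ) = _
  conv_lhs => rw [dualFam_apply C ℓ j]
  rw [inner_sum]
  have : ∀ a : Fin ℓ, ⟪dualFam C ℓ (i : ℕ), ((gram C ℓ)⁻¹ a j) • C (a : ℕ)⟫ =
      (if a = i then (gram C ℓ)⁻¹ a j else 0) := by
    intro a
    rw [real_inner_smul_right, inner_dualFam_C hC i a]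
    by_cases h : a = i <;> simp [h]
  rw [Finset.sum_congr rfl fun a _ => this a, Finset.sum_ite_eq' Finset.univ i]
  simp

lemma revDual_apply (C : ℕ → Euc m) (ℓ : ℕ) (i : Fin ℓ) :
    revDual C ℓ (i : ℕ) = dualFam C ℓ ((Fin.rev i : Fin ℓ) : ℕ) := by
  rw [revDual, Fin.val_rev]
  have h : ℓ - 1 - (i : ℕ) = ℓ - ((i : ℕ) + 1) := by omega
  rw [h]

lemma gram_revDual {C : ℕ → Euc m} {ℓ : ℕ}
    (hC : LinearIndependent ℝ (fun j : Fin ℓ => C j)) :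
    gram (revDual C ℓ) ℓ = ((gram C ℓ)⁻¹).submatrix Fin.rev Fin.rev := by
  ext i j
  show (inner ℝ (revDual C ℓ (i : ℕ)) (revDual C ℓ (j : ℕ)) : ℝ) = _
  rw [revDual_apply, revDual_apply]
  have := congrFun (congrFun (congrArg Matrix.of (congrArg (fun M => M)
    (gram_dualFam hC))) (Fin.rev i)) (Fin.rev j)
  show (inner ℝ (dualFam C ℓ ((Fin.rev i : Fin ℓ) : ℕ)) (dualFam C ℓ ((Fin.rev j : Fin ℓ) : ℕ)) : ℝ)
      = (gram C ℓ)⁻¹ (Fin.rev i) (Fin.rev j)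
  rw [← gram_dualFam hC]
  rfl

lemma det_gram_revDual {C : ℕ → Euc m} {ℓ : ℕ}
    (hC : LinearIndependent ℝ (fun j : Fin ℓ => C j)) :
    (gram (revDual C ℓ) ℓ).det = ((gram C ℓ).det)⁻¹ := by
  rw [gram_revDual hC]
  have : ((gram C ℓ)⁻¹).submatrix Fin.rev Fin.rev =
      ((gram C ℓ)⁻¹).submatrix (Fin.revPerm : Equiv.Perm (Fin ℓ)) Fin.revPerm := rfl
  rw [this, Matrix.det_submatrix_equiv_self, Matrix.det_nonsing_inv, Ring.inverse_eq_inv]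

lemma volB_revDual {C : ℕ → Euc m} {ℓ : ℕ}
    (hC : LinearIndependent ℝ (fun j : Fin ℓ => C j)) :
    volB (revDual C ℓ) ℓ = (volB C ℓ)⁻¹ := by
  rw [volB, volB, det_gram_revDual hC, Real.sqrt_inv]

lemma linearIndependent_of_gram_det {v : ℕ → Euc m} {ℓ : ℕ}
    (h : (gram v ℓ).det ≠ 0) : LinearIndependent ℝ (fun i : Fin ℓ => v i) := by
  rw [Fintype.linearIndependent_iff]
  intro c hc
  have hmv : (gram v ℓ) *ᵥ c = 0 := by
    funext j
    rw [Matrix.mulVec]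
    show (fun i => gram v ℓ j i) ⬝ᵥ c = 0
    rw [dotProduct]
    have : ∀ i : Fin ℓ, gram v ℓ j i * c i = ⟪v (j : ℕ), c i • v (i : ℕ)⟫ := by
      intro i
      rw [real_inner_smul_right]
      show gram v ℓ j i * c i = c i * gram v ℓ j i
      ring
    rw [Finset.sum_congr rfl fun i _ => this i, ← inner_sum, hc, inner_zero_right]
  have : c = 0 := by
    have h1 := congrArg (fun w => (gram v ℓ)⁻¹ *ᵥ w) hmv
    simp only [Matrix.mulVec_mulVec, Matrix.nonsing_inv_mul _ (isUnit_iff_ne_zero.2 h),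
      Matrix.one_mulVec, Matrix.mulVec_zero] at h1
    exact h1
  intro i
  rw [this]
  rfl

lemma revDual_linearIndependent {C : ℕ → Euc m} {ℓ : ℕ}
    (hC : LinearIndependent ℝ (fun j : Fin ℓ => C j)) :
    LinearIndependent ℝ (fun i : Fin ℓ => revDual C ℓ i) :=
  linearIndependent_of_gram_det (by
    rw [det_gram_revDual hC]
    exact inv_ne_zero (gram_det_ne_zero hC))

lemma inner_revDual_gso {C : ℕ → Euc m} {ℓ : ℕ}
    (hC : LinearIndependent ℝ (fun j : Fin ℓ => C j)) (hℓ : 1 ≤ ℓ) :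
    ⟪revDual C ℓ 0, gsoVec C (ℓ - 1)⟫ = 1 := by
  set i0 : Fin ℓ := ⟨ℓ - 1, by omega⟩ with hi0
  have h0 : revDual C ℓ 0 = dualFam C ℓ (i0 : ℕ) := by
    rw [revDual, Nat.sub_zero]
  have horth : ∀ w ∈ spanW C (ℓ - 1), ⟪dualFam C ℓ (i0 : ℕ), w⟫ = 0 := by
    intro w hw
    induction hw using Submodule.span_induction with
    | mem x hx =>
      obtain ⟨a, ha, rfl⟩ := hx
      have ha2 : a < ℓ - 1 := ha
      have ha' : a < ℓ := by omega
      show ⟪dualFam C ℓ (i0 : ℕ), C ((⟨a, ha'⟩ : Fin ℓ) : ℕ)⟫ = 0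
      rw [inner_dualFam_C hC i0 ⟨a, ha'⟩, if_neg]
      intro hEq
      have hv : a = ℓ - 1 := congrArg Fin.val hEq
      omega
    | zero => exact inner_zero_right _
    | add x y _ _ hx hy => rw [inner_add_right, hx, hy, add_zero]
    | smul r x _ hx => rw [real_inner_smul_right, hx, mul_zero]
  have hsplit : gsoVec C (ℓ - 1) = C (ℓ - 1) - (C (ℓ - 1) - gsoVec C (ℓ - 1)) := by abel
  rw [h0, hsplit, inner_sub_right, horth _ (sub_gsoVec_mem C (ℓ - 1))]
  have : C (ℓ - 1) = C ((i0 : Fin ℓ) : ℕ) := rfl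
  rw [this, inner_dualFam_C hC i0 i0, if_pos rfl, sub_zero]

lemma one_le_revDual_head_mul {C : ℕ → Euc m} {ℓ : ℕ}
    (hC : LinearIndependent ℝ (fun j : Fin ℓ => C j)) (hℓ : 1 ≤ ℓ) :
    1 ≤ ‖revDual C ℓ 0‖ * ‖gsoVec C (ℓ - 1)‖ :=
  calc (1 : ℝ) = ⟪revDual C ℓ 0, gsoVec C (ℓ - 1)⟫ := (inner_revDual_gso hC hℓ).symm
    _ ≤ ‖revDual C ℓ 0‖ * ‖gsoVec C (ℓ - 1)‖ := real_inner_le_norm _ _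

lemma volB_nonneg (C : ℕ → Euc m) (ℓ : ℕ) : 0 ≤ volB C ℓ := Real.sqrt_nonneg _

lemma volB_pos {C : ℕ → Euc m} {ℓ : ℕ}
    (hC : LinearIndependent ℝ (fun j : Fin ℓ => C j)) : 0 < volB C ℓ := by
  rw [volB_eq_prod hC]
  exact Finset.prod_pos fun a _ =>
    norm_pos_iff.2 (gsoVec_ne_zero hC a.isLt)

lemma lambda1_nonneg (L : Submodule ℤ (Euc m)) : 0 ≤ lambda1 L := by
  apply Real.sInf_nonneg
  rintro r ⟨x, _, _, rfl⟩
  exact norm_nonneg x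

lemma primal_power {γ : ℝ} {r : ℕ} (hH : IsHermiteBound γ r) {C : ℕ → Euc m}
    (hC : LinearIndependent ℝ (fun i : Fin r => C i)) {δ : ℝ} (hδ : 0 ≤ δ)
    (hγ : 0 ≤ γ) (hr : r ≠ 0) (hsvp : SVPReduced δ C r) :
    ‖C 0‖ ^ (2 * r) ≤ (δ ^ 2 * γ) ^ r * (volB C r) ^ 2 := by
  have hlam : 0 ≤ lambda1 (latticeSpan C r) := lambda1_nonneg _
  have hV : 0 ≤ volB C r := volB_nonneg C r
  have h1 : ‖C 0‖ ^ 2 ≤ δ ^ 2 * lambda1 (latticeSpan C r) ^ 2 := by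
    have h := pow_le_pow_left₀ (norm_nonneg _) hsvp 2
    calc ‖C 0‖ ^ 2 ≤ (δ * lambda1 (latticeSpan C r)) ^ 2 := h
      _ = δ ^ 2 * lambda1 (latticeSpan C r) ^ 2 := by ring
  have h2 := hH m C hC
  have h3 : ‖C 0‖ ^ 2 ≤ δ ^ 2 * γ * (volB C r) ^ ((2 : ℝ) / r) := by
    calc ‖C 0‖ ^ 2 ≤ δ ^ 2 * lambda1 (latticeSpan C r) ^ 2 := h1
      _ ≤ δ ^ 2 * (γ * (volB C r) ^ ((2 : ℝ) / r)) :=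
          mul_le_mul_of_nonneg_left h2 (sq_nonneg δ)
      _ = δ ^ 2 * γ * (volB C r) ^ ((2 : ℝ) / r) := by ring
  have h4 := pow_le_pow_left₀ (by positivity) h3 r
  have h5 : (volB C r ^ ((2 : ℝ) / r)) ^ r = volB C r ^ 2 := by
    rw [← Real.rpow_natCast (volB C r ^ ((2 : ℝ) / r)) r, ← Real.rpow_mul hV,
      div_mul_cancel₀ (2 : ℝ) (Nat.cast_ne_zero.2 hr), Real.rpow_two]
  calc ‖C 0‖ ^ (2 * r) = (‖C 0‖ ^ 2) ^ r := by rw [← pow_mul]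
    _ ≤ (δ ^ 2 * γ * (volB C r) ^ ((2 : ℝ) / r)) ^ r := h4
    _ = (δ ^ 2 * γ) ^ r * ((volB C r) ^ ((2 : ℝ) / r)) ^ r := by rw [mul_pow]
    _ = (δ ^ 2 * γ) ^ r * (volB C r) ^ 2 := by rw [h5]

lemma dual_power {γ : ℝ} {r : ℕ} (hH : IsHermiteBound γ r) {C : ℕ → Euc m}
    (hC : LinearIndependent ℝ (fun i : Fin r => C i)) {δ : ℝ} (hδ : 0 ≤ δ)
    (hγ : 0 ≤ γ) (hr : 1 ≤ r) (hsvp : SVPReduced δ (revDual C r) r) :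
    (volB C r) ^ 2 ≤ (δ ^ 2 * γ) ^ r * ‖gsoVec C (r - 1)‖ ^ (2 * r) := by
  set V := volB C r with hVdef
  set y := ‖revDual C r 0‖ with hydef
  set g := ‖gsoVec C (r - 1)‖ with hgdef
  have hVpos : 0 < V := volB_pos hC
  have hy := primal_power hH (revDual_linearIndependent hC) hδ hγ (by omega) hsvp
  rw [volB_revDual hC] at hy
  -- hy : y ^ (2*r) ≤ (δ^2*γ)^r * (V⁻¹)^2
  have hhead : 1 ≤ y * g := one_le_revDual_head_mul hC hr
  have h1 : (1 : ℝ) ≤ y ^ (2 * r) * g ^ (2 * r) := by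
    have := pow_le_pow_left₀ (by norm_num) hhead (2 * r)
    rwa [one_pow, mul_pow] at this
  have hVne : V ≠ 0 := ne_of_gt hVpos
  calc V ^ 2 = V ^ 2 * 1 := by ring
    _ ≤ V ^ 2 * (y ^ (2 * r) * g ^ (2 * r)) :=
        mul_le_mul_of_nonneg_left h1 (sq_nonneg V)
    _ = y ^ (2 * r) * (V ^ 2 * g ^ (2 * r)) := by ring
    _ ≤ ((δ ^ 2 * γ) ^ r * (V⁻¹) ^ 2) * (V ^ 2 * g ^ (2 * r)) :=
        mul_le_mul_of_nonneg_right hy (by positivity)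
    _ = (δ ^ 2 * γ) ^ r * g ^ (2 * r) * ((V⁻¹) ^ 2 * V ^ 2) := by ring
    _ = (δ ^ 2 * γ) ^ r * g ^ (2 * r) := by
        rw [inv_pow, inv_mul_cancel₀ (pow_ne_zero 2 hVne), mul_one]

lemma prod_blocks (g : ℕ → ℝ) (d k p : ℕ) :
    ∏ i ∈ Finset.range p, ∏ t ∈ Finset.range k, g (i * k + d + t) =
      ∏ j ∈ Finset.range (p * k), g (d + j) := by
  induction p with
  | zero => simp
  | succ p ih =>
    rw [Finset.prod_range_succ, ih, show (p + 1) * k = p * k + k by ring,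
      Finset.prod_range_add]
    congr 1
    exact Finset.prod_congr rfl fun t _ => by
      congr 1
      omega

lemma sum_exponents (k : ℕ) (hk : 1 ≤ k) (p : ℕ) :
    ((∑ i ∈ Finset.range p, (2 * k * i * k + k * (k - 1)) : ℕ) : ℝ) =
      (k : ℝ) * p * ((k : ℝ) * p - 1) := by
  induction p with
  | zero => simp
  | succ p ih =>
    rw [Finset.sum_range_succ]
    push_cast [Nat.cast_sub hk] at ih ⊢
    rw [ih]
    ring

end Aux

/-- under the Gama–Nguyen slide-reduction conditions on the blocks of
`B_{[d+1,n]}`, the block `B_{[d+1,n]}` is `(δ²γ_k)^{(n-d-1)/(2(k-1))}`-HSVP-reduced. -/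
theorem gn_slide_hsvp {m k d p n : ℕ} (hp : 1 ≤ p) (hk : 2 ≤ k) (hkd : k ≤ d)
    (hn : n = p * k + d) {δ γk : ℝ} (hδ : 1 ≤ δ) (hγk : 1 ≤ γk)
    (hHk : IsHermiteBound γk k)
    (B : ℕ → Euc m) (hB : LinearIndependent ℝ (fun i : Fin n => B i))
    (hprimal : ∀ i, i + 1 ≤ p → SVPReduced δ (block B (i * k + d)) k)
    (hdual : ∀ i, i + 2 ≤ p → DSVPReduced δ (block B (i * k + d + 1)) k) :
    ‖gsoVec B d‖ ≤ (δ ^ 2 * γk) ^ (((n : ℝ) - d - 1) / (2 * ((k : ℝ) - 1))) *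
      volB (block B d) (n - d) ^ ((1 : ℝ) / ((n : ℝ) - d)) := by
  classical
  have hk1 : 1 ≤ k := by omega
  have hδ0 : (0 : ℝ) ≤ δ := le_trans zero_le_one hδ
  have hγ0 : (0 : ℝ) ≤ γk := le_trans zero_le_one hγk
  have hE1 : (1 : ℝ) ≤ δ ^ 2 * γk := by nlinarith
  have hE0 : (0 : ℝ) < δ ^ 2 * γk := lt_of_lt_of_le one_pos hE1
  set E : ℝ := δ ^ 2 * γk with hE
  set g : ℕ → ℝ := fun j => ‖gsoVec B j‖ with hg
  set x : ℕ → ℝ := fun i => g (i * k + d) with hx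
  set V : ℕ → ℝ := fun i => ∏ t ∈ Finset.range k, g (i * k + d + t) with hV
  have hgpos : ∀ j, j < n → 0 < g j := fun j hj =>
    norm_pos_iff.2 (gsoVec_ne_zero hB hj)
  have hgnn : ∀ j, 0 ≤ g j := fun j => norm_nonneg _
  have hidx : ∀ i, i + 1 ≤ p → i * k + d + k ≤ n := by
    intro i hi
    have h1 : (i + 1) * k ≤ p * k := Nat.mul_le_mul_right k hi
    have h2 : (i + 1) * k = i * k + k := by ring
    omega
  have hxpos : ∀ i, i + 1 ≤ p → 0 < x i := by
    intro i hi
    exact hgpos (i * k + d) (by have := hidx i hi; omega)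
  have hVpos : ∀ i, i + 1 ≤ p → 0 < V i := by
    intro i hi
    refine Finset.prod_pos fun t ht => ?_
    have h1 := hidx i hi
    have h2 := Finset.mem_range.1 ht
    exact hgpos (i * k + d + t) (by omega)
  -- primal inequality
  have P : ∀ i, i + 1 ≤ p → x i ^ (2 * k) ≤ E ^ k * V i ^ 2 := by
    intro i hi
    have hsk := hidx i hi
    have hCLI := block_linearIndependent hB hsk
    have hp' := primal_power hHk hCLI hδ0 hγ0 (by omega) (hprimal i hi)
    rw [volB_block hB hsk] at hp'
    exact hp'
  -- dual inequality
  have D : ∀ i, i + 2 ≤ p →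
      (∏ t ∈ Finset.range k, g (i * k + d + 1 + t)) ^ 2 ≤ E ^ k * x (i + 1) ^ (2 * k) := by
    intro i hi
    have hsk : i * k + d + 1 + k ≤ n := by
      have h1 : (i + 2) * k ≤ p * k := Nat.mul_le_mul_right k hi
      have h2 : (i + 2) * k = i * k + k + k := by ring
      omega
    have hCLI := block_linearIndependent hB hsk
    have hdp := dual_power hHk hCLI hδ0 hγ0 (by omega) (hdual i hi).1
    rw [volB_block hB hsk] at hdp
    have h2 : gsoVec (block B (i * k + d + 1)) (k - 1) = gsoVec B ((i + 1) * k + d) := by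
      rw [gsoVec_block]
      have h3 : (i + 1) * k = i * k + k := by ring
      have h4 : i * k + d + 1 + (k - 1) = (i + 1) * k + d := by omega
      rw [h4]
    rw [h2] at hdp
    exact hdp
  -- link identity
  have L : ∀ i, x i * (∏ t ∈ Finset.range k, g (i * k + d + 1 + t)) = V i * x (i + 1) := by
    intro i
    have lhs : ∏ t ∈ Finset.range (k + 1), g (i * k + d + t) =
        x i * ∏ t ∈ Finset.range k, g (i * k + d + 1 + t) := by
      rw [Finset.prod_range_succ']
      rw [mul_comm]
      congr 1
      · exact Finset.prod_congr rfl fun t _ => by congr 1; omega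
    have rhs : ∏ t ∈ Finset.range (k + 1), g (i * k + d + t) = V i * x (i + 1) := by
      rw [Finset.prod_range_succ]
      congr 1
      have h3 : (i + 1) * k = i * k + k := by ring
      show g (i * k + d + k) = g ((i + 1) * k + d)
      congr 1
      omega
    rw [← lhs, rhs]
  -- chaining
  have C1 : ∀ i, i + 1 ≤ p → x 0 ^ (2 * k - 2) ≤ E ^ (2 * k * i) * x i ^ (2 * k - 2) := by
    intro i
    induction i with
    | zero => intro _; simp
    | succ i ih =>
      intro hi
      have hi' : i + 1 ≤ p := by omega
      have hxi := ih hi'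
      have hd := D i (by omega)
      have hlink := L i
      have hxp0 : 0 < x i := hxpos i hi'
      have hxp1 : 0 < x (i + 1) := hxpos (i + 1) (by omega)
      have hVp : 0 < V i := hVpos i hi'
      have hsplit1 : x (i + 1) ^ (2 * k) = x (i + 1) ^ (2 * k - 2) * x (i + 1) ^ 2 := by
        rw [← pow_add (x (i + 1)) (2 * k - 2) 2]
        congr 1
        omega
      have h1 : V i ^ 2 * x (i + 1) ^ 2 ≤
          (E ^ k * x i ^ 2 * x (i + 1) ^ (2 * k - 2)) * x (i + 1) ^ 2 := by
        calc V i ^ 2 * x (i + 1) ^ 2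
            = x i ^ 2 * (∏ t ∈ Finset.range k, g (i * k + d + 1 + t)) ^ 2 := by
              rw [← mul_pow, ← hlink, mul_pow]
          _ ≤ x i ^ 2 * (E ^ k * x (i + 1) ^ (2 * k)) :=
              mul_le_mul_of_nonneg_left hd (by positivity)
          _ = (E ^ k * x i ^ 2 * x (i + 1) ^ (2 * k - 2)) * x (i + 1) ^ 2 := by
              rw [hsplit1]; ring
      have h2 : V i ^ 2 ≤ E ^ k * x i ^ 2 * x (i + 1) ^ (2 * k - 2) :=
        le_of_mul_le_mul_right h1 (pow_pos hxp1 2)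
      have hp' := P i hi'
      have hsplit2 : x i ^ (2 * k) = x i ^ (2 * k - 2) * x i ^ 2 := by
        rw [← pow_add (x i) (2 * k - 2) 2]
        congr 1
        omega
      have hEkk : E ^ k * E ^ k = E ^ (2 * k) := by
        rw [← pow_add E k k]
        congr 1
        omega
      have h3 : x i ^ (2 * k - 2) * x i ^ 2 ≤
          (E ^ (2 * k) * x (i + 1) ^ (2 * k - 2)) * x i ^ 2 := by
        calc x i ^ (2 * k - 2) * x i ^ 2 = x i ^ (2 * k) := hsplit2.symm
          _ ≤ E ^ k * V i ^ 2 := hp'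
          _ ≤ E ^ k * (E ^ k * x i ^ 2 * x (i + 1) ^ (2 * k - 2)) :=
              mul_le_mul_of_nonneg_left h2 (by positivity)
          _ = (E ^ k * E ^ k) * x (i + 1) ^ (2 * k - 2) * x i ^ 2 := by ring
          _ = (E ^ (2 * k) * x (i + 1) ^ (2 * k - 2)) * x i ^ 2 := by rw [hEkk]
      have h4 : x i ^ (2 * k - 2) ≤ E ^ (2 * k) * x (i + 1) ^ (2 * k - 2) :=
        le_of_mul_le_mul_right h3 (pow_pos hxp0 2)
      have hEmul : E ^ (2 * k * i) * E ^ (2 * k) = E ^ (2 * k * (i + 1)) := by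
        have h5 : 2 * k * (i + 1) = 2 * k * i + 2 * k := by ring
        rw [h5, pow_add E (2 * k * i) (2 * k)]
      calc x 0 ^ (2 * k - 2) ≤ E ^ (2 * k * i) * x i ^ (2 * k - 2) := hxi
        _ ≤ E ^ (2 * k * i) * (E ^ (2 * k) * x (i + 1) ^ (2 * k - 2)) :=
            mul_le_mul_of_nonneg_left h4 (by positivity)
        _ = (E ^ (2 * k * i) * E ^ (2 * k)) * x (i + 1) ^ (2 * k - 2) := by ring
        _ = E ^ (2 * k * (i + 1)) * x (i + 1) ^ (2 * k - 2) := by rw [hEmul]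
  -- per-block bound
  have Q : ∀ i, i + 1 ≤ p →
      x 0 ^ ((2 * k - 2) * k) ≤ E ^ (2 * k * i * k + k * (k - 1)) * V i ^ (2 * (k - 1)) := by
    intro i hi
    have h := pow_le_pow_left₀ (by positivity) (C1 i hi) k
    have hp' := P i hi
    have h2 := pow_le_pow_left₀ (by positivity) hp' (k - 1)
    have e1 : (E ^ (2 * k * i)) ^ k = E ^ (2 * k * i * k) := (pow_mul E (2 * k * i) k).symm
    have e2 : (x i ^ (2 * k - 2)) ^ k = (x i ^ (2 * k)) ^ (k - 1) := by
      rw [← pow_mul (x i) (2 * k - 2) k, ← pow_mul (x i) (2 * k) (k - 1)]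
      congr 1
      have hkk : 2 * k * (k - 1) = 2 * k * k - 2 * k := by
        rw [Nat.mul_sub, Nat.mul_one]
      have hkk2 : (2 * k - 2) * k = 2 * k * k - 2 * k := by
        rw [Nat.sub_mul]
      omega
    have e3 : (E ^ k * V i ^ 2) ^ (k - 1) = E ^ (k * (k - 1)) * V i ^ (2 * (k - 1)) := by
      rw [mul_pow (E ^ k) (V i ^ 2) (k - 1), ← pow_mul E k (k - 1), ← pow_mul (V i) 2 (k - 1)]
    calc x 0 ^ ((2 * k - 2) * k) = (x 0 ^ (2 * k - 2)) ^ k := (pow_mul (x 0) (2 * k - 2) k)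
      _ ≤ (E ^ (2 * k * i) * x i ^ (2 * k - 2)) ^ k := h
      _ = E ^ (2 * k * i * k) * (x i ^ (2 * k)) ^ (k - 1) := by
          rw [mul_pow (E ^ (2 * k * i)) (x i ^ (2 * k - 2)) k, e1, e2]
      _ ≤ E ^ (2 * k * i * k) * (E ^ k * V i ^ 2) ^ (k - 1) :=
          mul_le_mul_of_nonneg_left h2 (by positivity)
      _ = E ^ (2 * k * i * k + k * (k - 1)) * V i ^ (2 * (k - 1)) := by
          rw [e3, ← mul_assoc, ← pow_add E (2 * k * i * k) (k * (k - 1))]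
  -- aggregate over blocks
  set T : ℕ := ∑ i ∈ Finset.range p, (2 * k * i * k + k * (k - 1)) with hT
  set VV : ℝ := ∏ j ∈ Finset.range (p * k), g (d + j) with hVV
  have hVVpos : 0 < VV := by
    rw [hVV]
    refine Finset.prod_pos fun j hj => ?_
    have := Finset.mem_range.1 hj
    exact hgpos (d + j) (by omega)
  have hagg : x 0 ^ ((2 * k - 2) * k * p) ≤ E ^ T * VV ^ (2 * (k - 1)) := by
    have h := Finset.prod_le_prod (s := Finset.range p)
      (f := fun _ => x 0 ^ ((2 * k - 2) * k))
      (g := fun i => E ^ (2 * k * i * k + k * (k - 1)) * V i ^ (2 * (k - 1)))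
      (fun i _ => by positivity)
      (fun i hi => Q i (Finset.mem_range.1 hi))
    rw [Finset.prod_const, Finset.card_range, ← pow_mul] at h
    rw [Finset.prod_mul_distrib, Finset.prod_pow, Finset.prod_pow_eq_pow_sum] at h
    have hVeq : ∏ i ∈ Finset.range p, V i = VV := by
      rw [hVV, hV, ← prod_blocks g d k p]
    rwa [hVeq] at h
  -- final conversion
  have hgoalV : volB (block B d) (n - d) = VV := by
    have hdn : d + (n - d) ≤ n := by omega
    rw [volB_block hB hdn, hVV]
    have hnd : n - d = p * k := by omega
    rw [hnd]
  rw [hgoalV]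
  have hx0 : x 0 = ‖gsoVec B d‖ := by
    show g (0 * k + d) = ‖gsoVec B d‖
    rw [Nat.zero_mul, Nat.zero_add]
  rw [← hx0]
  set N : ℕ := (2 * k - 2) * k * p with hN
  have hNne : N ≠ 0 := by
    rw [hN]
    have h1 : 2 * k - 2 ≠ 0 := by omega
    have h2 : k ≠ 0 := by omega
    have h3 : p ≠ 0 := by omega
    positivity
  have hkne : (k : ℝ) - 1 ≠ 0 := by
    have : (2 : ℝ) ≤ (k : ℝ) := by exact_mod_cast hk
    nlinarith
  have hpkne : (p : ℝ) * (k : ℝ) ≠ 0 := by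
    have h1 : (1 : ℝ) ≤ (p : ℝ) := by exact_mod_cast hp
    have h2 : (2 : ℝ) ≤ (k : ℝ) := by exact_mod_cast hk
    nlinarith
  have hnR : (n : ℝ) = (p : ℝ) * (k : ℝ) + (d : ℝ) := by
    rw [hn]; push_cast; ring
  have hNR : ((N : ℕ) : ℝ) = (2 * (k : ℝ) - 2) * (k : ℝ) * (p : ℝ) := by
    rw [hN]; push_cast [Nat.cast_sub (by omega : 2 ≤ 2 * k)]; ring
  have hE1N : (E ^ (((n : ℝ) - d - 1) / (2 * ((k : ℝ) - 1)))) ^ N = E ^ T := by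
    rw [← Real.rpow_natCast (E ^ (((n : ℝ) - d - 1) / (2 * ((k : ℝ) - 1)))) N,
      ← Real.rpow_mul hE0.le]
    have heq : (((n : ℝ) - d - 1) / (2 * ((k : ℝ) - 1))) * (N : ℝ) = (T : ℝ) := by
      rw [hT, sum_exponents k hk1 p, hNR, hnR]
      field_simp
      ring
    rw [heq, Real.rpow_natCast]
  have hE2N : (VV ^ ((1 : ℝ) / ((n : ℝ) - d))) ^ N = VV ^ (2 * (k - 1)) := by
    rw [← Real.rpow_natCast (VV ^ ((1 : ℝ) / ((n : ℝ) - d))) N,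
      ← Real.rpow_mul hVVpos.le]
    have heq : ((1 : ℝ) / ((n : ℝ) - d)) * (N : ℝ) = ((2 * (k - 1) : ℕ) : ℝ) := by
      rw [hNR, hnR]
      push_cast [Nat.cast_sub hk1]
      field_simp
      ring
    rw [heq, Real.rpow_natCast]
  have hRHS0 : (0 : ℝ) ≤ E ^ (((n : ℝ) - d - 1) / (2 * ((k : ℝ) - 1))) *
      VV ^ ((1 : ℝ) / ((n : ℝ) - d)) :=
    mul_nonneg (Real.rpow_nonneg hE0.le _) (Real.rpow_nonneg hVVpos.le _)
  have hx00 : (0 : ℝ) ≤ x 0 := hgnn _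
  refine (pow_le_pow_iff_left₀ hx00 hRHS0 hNne).1 ?_
  rw [mul_pow, hE1N, hE2N]
  exact hagg

end
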